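/- [Global sublinear rate] Let H = pL_p, let x* be a global minimizer of F = f + h with F* = F(x*), and let the sequence (x_k) be generated by x_0 ∈ dom h, x_{k+1} a minimizer over E of y ↦ Ω_p(f,x_k;y) + (H/(p+1)!)‖y−x_k‖^{p+1} + h(y). Assume D := sup{‖x − x*‖ : x ∈ dom h, F(x) ≤ F(x_0)} is finite. Then for every k ≥ 2: F(x_k) − F* ≤ ((p+1)(2p)^p/p!)·L_p·D^{p+1}/(k−1)^p. -/

import Mathlib

open scoped RealInnerProductSpace

/-- The `p`-th order Taylor polynomial `Ω_p(f,x;y)` of `f` at `x`, evaluated at `y`. -/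
noncomputable def OmegaTaylor {E : Type*} [NormedAddCommGroup E] [InnerProductSpace ℝ E]
    (p : ℕ) (f : E → ℝ) (x y : E) : ℝ :=
  ∑ k ∈ Finset.range (p + 1),
    (1 / (Nat.factorial k : ℝ)) * iteratedFDeriv ℝ k f x (fun _ => y - x)

open Set Finset


section Translation

variable {E F : Type*} [NormedAddCommGroup E] [NormedSpace ℝ E]
  [NormedAddCommGroup F] [NormedSpace ℝ F]

lemma fderiv_comp_const_add' (g : E → F) (z x : E) :
    fderiv ℝ (fun y => g (z + y)) x = fderiv ℝ g (z + x) := by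
  by_cases hg : DifferentiableAt ℝ g (z + x)
  · have h1 : HasFDerivAt (fun y : E => z + y) (ContinuousLinearMap.id ℝ E) x :=
      (hasFDerivAt_id x).const_add z
    have := (hg.hasFDerivAt.comp x h1).fderiv
    rw [ContinuousLinearMap.comp_id] at this; exact this
  · rw [fderiv_zero_of_not_differentiableAt hg, fderiv_zero_of_not_differentiableAt]
    intro hc
    apply hg
    have h2 : DifferentiableAt ℝ (fun w : E => w - z) (z + x) :=
      differentiable_id.sub_const z |>.differentiableAt
    have h3 : DifferentiableAt ℝ ((fun y => g (z + y)) ∘ (fun w : E => w - z)) (z + x) := by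
      apply DifferentiableAt.comp
      · simpa using hc
      · exact h2
    have h4 : ((fun y => g (z + y)) ∘ (fun w : E => w - z)) = g := by
      funext w; simp [Function.comp]
    rwa [h4] at h3

lemma iteratedFDeriv_comp_const_add' (n : ℕ) (g : E → F) (z : E) :
    (fun x => iteratedFDeriv ℝ n (fun y => g (z + y)) x)
      = fun x => iteratedFDeriv ℝ n g (z + x) := by
  induction n with
  | zero => funext x; ext m; simp
  | succ n IH =>
    funext x
    ext m
    rw [iteratedFDeriv_succ_apply_left, iteratedFDeriv_succ_apply_left]
    have : fderiv ℝ (iteratedFDeriv ℝ n (fun y => g (z + y))) x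
        = fderiv ℝ (iteratedFDeriv ℝ n g) (z + x) := by
      have IH' : (iteratedFDeriv ℝ n fun y => g (z + y))
          = fun x => iteratedFDeriv ℝ n g (z + x) := IH
      rw [IH']
      exact fderiv_comp_const_add' (iteratedFDeriv ℝ n g) z x
    rw [this]

end Translation

/-- If `φ 0 = 0` and `|φ'| ≤ c t^n` on `[0,1]`, then `|φ t| ≤ c t^(n+1)/(n+1)` there. -/
lemma abs_le_of_deriv_le_pow (φ : ℝ → ℝ) (s : Set ℝ) (hs : IsOpen s)
    (hIcc : Icc (0:ℝ) 1 ⊆ s) (hφ : DifferentiableOn ℝ φ s) (hφ0 : φ 0 = 0)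
    (c : ℝ) (n : ℕ) (hd : ∀ t ∈ Icc (0:ℝ) 1, |deriv φ t| ≤ c * t ^ n) :
    ∀ t ∈ Icc (0:ℝ) 1, |φ t| ≤ c * t ^ (n + 1) / (n + 1) := by
  have hdiff : ∀ t ∈ Icc (0:ℝ) 1, DifferentiableAt ℝ φ t := fun t ht =>
    hφ.differentiableAt (hs.mem_nhds (hIcc ht))
  have key : ∀ ε : ℝ, ε = 1 ∨ ε = -1 → ∀ t ∈ Icc (0:ℝ) 1,
      ε * φ t ≤ c * t ^ (n + 1) / (n + 1) := by
    intro ε hε t ht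
    set u : ℝ → ℝ := fun t => c * t ^ (n + 1) / (n + 1) - ε * φ t with hu
    have hcont : ContinuousOn u (Icc (0:ℝ) 1) := by
      apply ContinuousOn.sub
      · exact (continuous_const.mul ((continuous_pow _))).continuousOn.div_const _
      · exact continuousOn_const.mul ((hφ.continuousOn).mono hIcc)
    have hderivu : ∀ z ∈ Icc (0:ℝ) 1, HasDerivAt u (c * z ^ n - ε * deriv φ z) z := by
      intro z hz
      have h1 : HasDerivAt (fun t : ℝ => c * t ^ (n + 1) / (n + 1))
          (c * ((n + 1) * z ^ n) / (n + 1)) z := by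
        simpa [mul_div_assoc] using
          (((hasDerivAt_pow (n + 1) z).const_mul c).div_const ((n : ℝ) + 1))
      have h2 : HasDerivAt (fun t => ε * φ t) (ε * deriv φ z) z :=
        ((hdiff z hz).hasDerivAt).const_mul ε
      have h3 := h1.sub h2
      have : c * ((n + 1) * z ^ n) / (n + 1) = c * z ^ n := by
        field_simp
      rwa [this] at h3
    have hmono : MonotoneOn u (Icc (0:ℝ) 1) := by
      apply monotoneOn_of_deriv_nonneg (convex_Icc 0 1) hcont
      · intro z hz
        rw [interior_Icc] at hz
        exact ((hderivu z (Ioo_subset_Icc_self hz)).differentiableAt).differentiableWithinAt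
      · intro z hz
        rw [interior_Icc] at hz
        have hz' := Ioo_subset_Icc_self hz
        rw [(hderivu z hz').deriv]
        have h4 : ε * deriv φ z ≤ |deriv φ z| := by
          rcases hε with rfl | rfl
          · simpa using le_abs_self _
          · simpa using neg_le_abs (deriv φ z)
        have := hd z hz'
        linarith
    have h0 : u 0 = 0 := by simp [hu, hφ0]
    have := hmono (left_mem_Icc.2 zero_le_one) ht ht.1
    rw [h0] at this
    simp only [hu] at this
    linarith
  intro t ht
  rw [abs_le']
  constructor
  · simpa using key 1 (Or.inl rfl) t ht
  · have := key (-1) (Or.inr rfl) t ht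
    linarith

lemma taylor1d_aux : ∀ (q : ℕ) (g : ℝ → ℝ) (s : Set ℝ), IsOpen s → Icc (0:ℝ) 1 ⊆ s →
    ContDiffOn ℝ q g s → ∀ (A : ℝ) (m : ℕ),
    (∀ t ∈ Icc (0:ℝ) 1, |iteratedDeriv q g t - iteratedDeriv q g 0| ≤ A * t ^ m) →
    ∀ t ∈ Icc (0:ℝ) 1,
      |g t - ∑ k ∈ range (q + 1), iteratedDeriv k g 0 * t ^ k / (Nat.factorial k : ℝ)|
        ≤ A * (Nat.factorial m : ℝ) * t ^ (q + m) / (Nat.factorial (q + m) : ℝ) := by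
  intro q
  induction q with
  | zero =>
    intro g s hs hIcc hg A m hA t ht
    have h1 := hA t ht
    simp only [iteratedDeriv_zero] at h1
    simp only [zero_add, Finset.sum_range_one, pow_zero, Nat.factorial_zero, iteratedDeriv_zero]
    have hfac : (0:ℝ) < (Nat.factorial m : ℝ) := by positivity
    calc |g t - g 0 * 1 / (1:ℕ)| = |g t - g 0| := by norm_num
    _ ≤ A * t ^ m := h1
    _ = A * (Nat.factorial m : ℝ) * t ^ m / (Nat.factorial m : ℝ) := by field_simp
  | succ q IH =>
    intro g s hs hIcc hg A m hA t ht
    -- the derivative of g is C^q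
    have hg' : ContDiffOn ℝ q (deriv g) s := by
      apply hg.deriv_of_isOpen hs
      exact_mod_cast le_refl ((q:ℕ∞) + 1)
    have hgd : DifferentiableOn ℝ g s := by
      apply hg.differentiableOn
      simp
    have hA' : ∀ t ∈ Icc (0:ℝ) 1,
        |iteratedDeriv q (deriv g) t - iteratedDeriv q (deriv g) 0| ≤ A * t ^ m := by
      intro t ht
      rw [← iteratedDeriv_succ']
      exact hA t ht
    have ihres := IH (deriv g) s hs hIcc hg' A m hA'
    -- define the remainder
    set φ : ℝ → ℝ := fun t => g t - ∑ k ∈ range (q + 2),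
      iteratedDeriv k g 0 * t ^ k / (Nat.factorial k : ℝ) with hφdef
    have hpoly : ∀ z : ℝ, HasDerivAt
        (fun t : ℝ => ∑ k ∈ range (q + 2), iteratedDeriv k g 0 * t ^ k / (Nat.factorial k : ℝ))
        (∑ k ∈ range (q + 1), iteratedDeriv (k+1) g 0 * z ^ k / (Nat.factorial k : ℝ)) z := by
      intro z
      have h := HasDerivAt.fun_sum (fun k (_ : k ∈ range (q+2)) =>
        ((hasDerivAt_pow k z).const_mul (iteratedDeriv k g 0)).div_const (Nat.factorial k : ℝ))
      refine h.congr_deriv ?_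
      symm
      conv_rhs => rw [Finset.sum_range_succ']
      norm_num
      apply Finset.sum_congr rfl
      intro i _
      have hfac : (Nat.factorial (i+1) : ℝ) = (i+1) * (Nat.factorial i : ℝ) := by
        rw [Nat.factorial_succ]; push_cast; ring
      rw [hfac]
      have h1 : (0:ℝ) < (Nat.factorial i : ℝ) := by positivity
      field_simp
    have hφdiff : DifferentiableOn ℝ φ s := by
      apply hgd.sub
      intro z hz
      exact ((hpoly z).differentiableAt).differentiableWithinAt
    have hφ0 : φ 0 = 0 := by
      simp only [hφdef]
      rw [Finset.sum_eq_single 0]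
      · simp
      · intro k _ hk
        rw [zero_pow hk]; ring
      · intro hk; exact absurd (Finset.mem_range.2 (Nat.succ_pos _)) hk
    have hφderiv : ∀ z ∈ s, deriv φ z = deriv g z -
        ∑ k ∈ range (q + 1), iteratedDeriv k (deriv g) 0 * z ^ k / (Nat.factorial k : ℝ) := by
      intro z hz
      have h1 : DifferentiableAt ℝ g z := hgd.differentiableAt (hs.mem_nhds hz)
      have h2 := (h1.hasDerivAt.fun_sub (hpoly z)).deriv
      rw [h2]
      congr 1
      apply Finset.sum_congr rfl
      intro k _
      rw [← iteratedDeriv_succ']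
    have hd : ∀ z ∈ Icc (0:ℝ) 1, |deriv φ z| ≤
        (A * (Nat.factorial m : ℝ) / (Nat.factorial (q + m) : ℝ)) * z ^ (q + m) := by
      intro z hz
      rw [hφderiv z (hIcc hz)]
      have := ihres z hz
      calc |deriv g z - ∑ k ∈ range (q + 1),
            iteratedDeriv k (deriv g) 0 * z ^ k / (Nat.factorial k : ℝ)|
          ≤ A * (Nat.factorial m : ℝ) * z ^ (q + m) / (Nat.factorial (q + m) : ℝ) := this
        _ = (A * (Nat.factorial m : ℝ) / (Nat.factorial (q + m) : ℝ)) * z ^ (q + m) := by ring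
    have hfin := abs_le_of_deriv_le_pow φ s hs hIcc hφdiff hφ0 _ _ hd t ht
    have heq : (A * (Nat.factorial m : ℝ) / (Nat.factorial (q + m) : ℝ)) * t ^ (q + m + 1)
        / ((q + m : ℕ) + 1)
        = A * (Nat.factorial m : ℝ) * t ^ (q + 1 + m) / (Nat.factorial (q + 1 + m) : ℝ) := by
      have h1 : q + 1 + m = (q + m) + 1 := by ring
      rw [h1]
      rw [Nat.factorial_succ]
      have h2 : (0:ℝ) < (Nat.factorial (q+m) : ℝ) := by positivity
      push_cast
      rw [div_mul_eq_mul_div, div_div]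
      ring
    rw [heq] at hfin
    exact hfin

lemma omega_taylor_bound {E : Type*} [NormedAddCommGroup E] [InnerProductSpace ℝ E] (p : ℕ) (f : E → ℝ) (U : Set E) (hU : IsOpen U)
    (hf : ContDiffOn ℝ (p : ℕ∞) f U) (Lp : ℝ) (z w : E)
    (hseg : ∀ t ∈ Icc (0:ℝ) 1, z + t • (w - z) ∈ U)
    (hLipseg : ∀ t ∈ Icc (0:ℝ) 1,
      ‖iteratedFDeriv ℝ p f (z + t • (w - z)) - iteratedFDeriv ℝ p f z‖ ≤ Lp * ‖t • (w - z)‖) :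
    |f w - OmegaTaylor p f z w| ≤ Lp * ‖w - z‖ ^ (p + 1) / (Nat.factorial (p + 1) : ℝ) := by
  set v : E := w - z with hv
  set L : ℝ →L[ℝ] E := ContinuousLinearMap.toSpanSingleton ℝ v with hL
  have hLapp : ∀ t : ℝ, L t = t • v := fun t => rfl
  set fz : E → ℝ := fun y => f (z + y) with hfz
  set Uz : Set E := (fun y : E => z + y) ⁻¹' U with hUz
  have hUzopen : IsOpen Uz := hU.preimage (continuous_const.add continuous_id)
  set s : Set ℝ := L ⁻¹' Uz with hsdef
  have hsopen : IsOpen s := hUzopen.preimage L.continuous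
  have hmem : ∀ t : ℝ, t ∈ s ↔ z + t • v ∈ U := fun t => Iff.rfl
  have hIcc : Icc (0:ℝ) 1 ⊆ s := fun t ht => (hmem t).2 (hseg t ht)
  have hfzc : ContDiffOn ℝ (p : ℕ∞) fz Uz :=
    hf.comp ((contDiff_const.add contDiff_id).contDiffOn) (fun y hy => hy)
  set g : ℝ → ℝ := fz ∘ L with hg
  have hgc : ContDiffOn ℝ (p : ℕ∞) g s := hfzc.comp_continuousLinearMap L
  have key : ∀ k : ℕ, k ≤ p → ∀ t ∈ s,
      iteratedDeriv k g t = iteratedFDeriv ℝ k f (z + t • v) (fun _ => v) := by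
    intro k hk t ht
    rw [iteratedDeriv_eq_iteratedFDeriv]
    have h1 : iteratedFDeriv ℝ k g t = iteratedFDerivWithin ℝ k g s t :=
      (iteratedFDerivWithin_of_isOpen k hsopen ht).symm
    have h2 := L.iteratedFDerivWithin_comp_right hfzc hUzopen.uniqueDiffOn hsopen.uniqueDiffOn
      (x := t) ht (i := k) (by exact_mod_cast hk)
    have h3 : iteratedFDerivWithin ℝ k fz Uz (L t) = iteratedFDeriv ℝ k fz (L t) :=
      iteratedFDerivWithin_of_isOpen k hUzopen ht
    have h4 : iteratedFDeriv ℝ k fz (L t) = iteratedFDeriv ℝ k f (z + t • v) := by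
      have := congrFun (iteratedFDeriv_comp_const_add' k f z) (L t)
      simpa [hLapp] using this
    rw [h1, h2, h3, h4]
    rw [ContinuousMultilinearMap.compContinuousLinearMap_apply]
    congr 1
    funext i
    simp [hLapp, one_smul]
  have h0s : (0:ℝ) ∈ s := hIcc ⟨le_refl 0, zero_le_one⟩
  have hz0 : z + (0:ℝ) • v = z := by simp
  set M : ℝ := Lp * ‖v‖ ^ (p + 1) with hM
  have hyp : ∀ t ∈ Icc (0:ℝ) 1,
      |iteratedDeriv p g t - iteratedDeriv p g 0| ≤ M * t ^ 1 := by
    intro t ht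
    rw [key p le_rfl t (hIcc ht), key p le_rfl 0 h0s, hz0]
    have hsub : iteratedFDeriv ℝ p f (z + t • v) (fun _ => v)
        - iteratedFDeriv ℝ p f z (fun _ => v)
        = (iteratedFDeriv ℝ p f (z + t • v) - iteratedFDeriv ℝ p f z) (fun _ => v) := by
      simp [ContinuousMultilinearMap.sub_apply]
    rw [← Real.norm_eq_abs, hsub]
    calc ‖(iteratedFDeriv ℝ p f (z + t • v) - iteratedFDeriv ℝ p f z) (fun _ => v)‖
        ≤ ‖iteratedFDeriv ℝ p f (z + t • v) - iteratedFDeriv ℝ p f z‖ * ∏ _i : Fin p, ‖v‖ :=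
          ContinuousMultilinearMap.le_opNorm _ _
      _ ≤ (Lp * ‖t • v‖) * ∏ _i : Fin p, ‖v‖ := by
          apply mul_le_mul_of_nonneg_right (hLipseg t ht)
          positivity
      _ = M * t ^ 1 := by
          rw [norm_smul, Finset.prod_const, Finset.card_univ, Fintype.card_fin,
            Real.norm_eq_abs, abs_of_nonneg ht.1, hM]
          ring
  have conc := taylor1d_aux p g s hsopen hIcc (by exact_mod_cast hgc) M 1 hyp 1
    ⟨zero_le_one, le_refl 1⟩
  have hg1 : g 1 = f w := by
    simp only [hg, Function.comp_apply, hLapp, one_smul, hfz, hv]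
    congr 1
    abel
  have hsum : ∑ k ∈ range (p + 1), iteratedDeriv k g 0 * (1:ℝ) ^ k / (Nat.factorial k : ℝ)
      = OmegaTaylor p f z w := by
    unfold OmegaTaylor
    apply Finset.sum_congr rfl
    intro k hk
    rw [Finset.mem_range] at hk
    rw [key k (by omega : k ≤ p) 0 h0s, hz0]
    simp only [one_pow, hv]
    ring
  rw [hg1, hsum] at conc
  calc |f w - OmegaTaylor p f z w| ≤ M * (Nat.factorial 1 : ℝ) * 1 ^ (p + 1)
      / (Nat.factorial (p + 1) : ℝ) := conc
    _ = Lp * ‖w - z‖ ^ (p + 1) / (Nat.factorial (p + 1) : ℝ) := by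
      simp [hM, hv]

/-- the key numeric inequality for the recursion -/
lemma num_ineq (p : ℕ) (hp : 2 ≤ p) (s : ℝ) (hs : 2 * (p:ℝ) ≤ s) :
    (1 - 2 * (p:ℝ) / (s + 1)) * (((p:ℝ) + 1) * (2 * (p:ℝ) / s) ^ p)
      + (2 * (p:ℝ) / (s + 1)) ^ (p + 1)
      ≤ ((p:ℝ) + 1) * (2 * (p:ℝ) / (s + 1)) ^ p := by
  have hP : (2:ℝ) ≤ (p:ℝ) := by exact_mod_cast hp
  set P : ℝ := (p : ℝ) with hPdef
  have hs4 : (4:ℝ) ≤ s := by linarith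
  have hspos : (0:ℝ) < s := by linarith
  have hs1pos : (0:ℝ) < s + 1 := by linarith
  have hsP : P < s := by linarith
  have hsPpos : (0:ℝ) < s - P := by linarith
  have hinv : 1/s ≤ 1/4 := by
    rw [div_le_div_iff₀ hspos (by norm_num)]; linarith
  have hinvpos : (0:ℝ) < 1/s := by positivity
  have hX : (0:ℝ) < s ^ p := by positivity
  have hY : (0:ℝ) < (s+1) ^ p := by positivity
  have hT : (0:ℝ) < (2 * P) ^ p := by positivity
  have hYX : (s+1)^p * (s - P) ≤ s^p * s := by
    have h1 : 1 - P / s ≤ (1 - 1 / s) ^ p := by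
      have := one_add_mul_le_pow (a := -(1/s)) (by linarith : (-2:ℝ) ≤ -(1/s)) p
      calc 1 - P / s = 1 + (p:ℝ) * (-(1/s)) := by rw [← hPdef]; ring
        _ ≤ (1 + -(1/s)) ^ p := this
        _ = (1 - 1/s) ^ p := by ring_nf
    have hs2 : (1:ℝ) ≤ s^2 := by nlinarith
    have e1 : (s+1)/s * (1 - 1/s) = 1 - 1/s^2 := by field_simp; ring
    have h2 : ((s+1)/s) ^ p * (1 - 1/s) ^ p ≤ 1 := by
      rw [← mul_pow, e1]
      apply pow_le_one₀
      · have : 1/s^2 ≤ 1 := by rw [div_le_one (by positivity)]; exact hs2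
        linarith
      · have : (0:ℝ) < 1/s^2 := by positivity
        linarith
    have h3 : (0:ℝ) < 1 - P / s := by
      rw [sub_pos, div_lt_one hspos]; exact hsP
    have h4 : (0:ℝ) < (1 - 1/s) ^ p := by
      apply pow_pos; linarith
    have h5 : ((s+1)/s) ^ p ≤ 1 / (1 - 1/s) ^ p := by
      rw [le_div_iff₀ h4]; exact h2
    have h6 : (1:ℝ) / (1 - 1/s) ^ p ≤ 1 / (1 - P/s) :=
      one_div_le_one_div_of_le h3 h1
    have h7 : ((s+1)/s) ^ p ≤ 1 / (1 - P/s) := le_trans h5 h6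
    have h8 : (1:ℝ) / (1 - P/s) = s / (s - P) := by
      rw [show 1 - P/s = (s - P)/s by field_simp]
      rw [one_div_div]
    rw [h8, div_pow, div_le_div_iff₀ hX hsPpos] at h7
    linarith [h7]
  have key : (s + 1 - 2*P) * (P + 1) * (s+1)^p + 2 * P * s^p ≤ (P + 1) * (s + 1) * s^p := by
    have h1 : (0:ℝ) ≤ (P + 1) * (s + 1 - 2*P) := by nlinarith
    have h2 := mul_le_mul_of_nonneg_left hYX h1
    rw [← mul_le_mul_iff_of_pos_right hsPpos]
    nlinarith [h2, mul_nonneg (mul_nonneg (mul_nonneg hX.le (by linarith : (0:ℝ) ≤ P))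
      (by linarith : (0:ℝ) ≤ P - 1)) (by linarith : (0:ℝ) ≤ s + 1)]
  have hkey2 := mul_le_mul_of_nonneg_right key hT.le
  have hsne : s ≠ 0 := ne_of_gt hspos
  have hs1ne : s + 1 ≠ 0 := ne_of_gt hs1pos
  rw [← mul_le_mul_iff_of_pos_right (show (0:ℝ) < s^p * (s+1)^p * (s+1) by positivity)]
  have eL : ((1 - 2*P/(s+1)) * ((P+1) * (2*P/s)^p) + (2*P/(s+1))^(p+1)) * (s^p*(s+1)^p*(s+1))
      = (s+1-2*P)*(P+1)*(s+1)^p*(2*P)^p + 2*P*s^p*(2*P)^p := by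
    rw [div_pow, div_pow, pow_succ (2*P), pow_succ (s+1)]
    field_simp
  have eR : (P+1) * (2*P/(s+1))^p * (s^p*(s+1)^p*(s+1)) = (P+1)*(s+1)*s^p*(2*P)^p := by
    rw [div_pow]
    field_simp
  rw [eL, eR]
  nlinarith [hkey2]

set_option maxHeartbeats 1000000 in
/-- Theorem 4.1 of the paper: global sublinear rate of RCTM with `H = pL_p`.
If `D` bounds the radius of the initial level set, then for all `k ≥ 2`,
`F(x_k) − F* ≤ ((p+1)(2p)^p/p!) · L_p D^{p+1}/(k−1)^p`. -/
theorem rctm_global_sublinear_rate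
    {E : Type*} [NormedAddCommGroup E] [InnerProductSpace ℝ E] [FiniteDimensional ℝ E]
    (p : ℕ) (hp : 2 ≤ p) (f h F : E → ℝ) (domh U : Set E)
    (hdomcl : IsClosed domh) (hU : IsOpen U) (hUconv : Convex ℝ U) (hsub : domh ⊆ U)
    (hf : ContDiffOn ℝ (p : ℕ∞) f U) (hfconv : ConvexOn ℝ U f)
    (hhconv : ConvexOn ℝ domh h) (hhlsc : LowerSemicontinuousOn h domh)
    (hF : ∀ z, F z = f z + h z)
    (Lp H : ℝ) (hLp : 0 < Lp) (hH : H = (p : ℝ) * Lp)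
    (hLip : ∀ z ∈ domh, ∀ w ∈ domh,
      ‖iteratedFDeriv ℝ p f z - iteratedFDeriv ℝ p f w‖ ≤ Lp * ‖z - w‖)
    (xstar : E) (hxstar : xstar ∈ domh) (hminF : ∀ y ∈ domh, F xstar ≤ F y)
    (Fstar : ℝ) (hFstar : Fstar = F xstar)
    (x : ℕ → E) (hx0 : x 0 ∈ domh)
    (hstep : ∀ k : ℕ, x (k + 1) ∈ domh ∧ ∀ y ∈ domh,
      OmegaTaylor p f (x k) (x (k + 1))
          + H / (Nat.factorial (p + 1) : ℝ) * ‖x (k + 1) - x k‖ ^ (p + 1) + h (x (k + 1)) ≤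
        OmegaTaylor p f (x k) y
          + H / (Nat.factorial (p + 1) : ℝ) * ‖y - x k‖ ^ (p + 1) + h y)
    (D : ℝ) (hD : ∀ z ∈ domh, F z ≤ F (x 0) → ‖z - xstar‖ ≤ D) :
    ∀ k : ℕ, 2 ≤ k →
      F (x k) - Fstar ≤
        ((p : ℝ) + 1) * (2 * (p : ℝ)) ^ p / (Nat.factorial p : ℝ)
          * (Lp * D ^ (p + 1) / ((k : ℝ) - 1) ^ p) := by
  have hdomconv : Convex ℝ domh := hhconv.1
  have hPcast : (2:ℝ) ≤ (p:ℝ) := by exact_mod_cast hp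
  have hfacp : (0:ℝ) < (Nat.factorial p : ℝ) := by positivity
  have hfacp1 : (0:ℝ) < (Nat.factorial (p+1) : ℝ) := by positivity
  have hfacsucc : (Nat.factorial (p+1) : ℝ) = ((p:ℝ)+1) * (Nat.factorial p : ℝ) := by
    rw [Nat.factorial_succ]; push_cast; ring
  have hHLp : Lp ≤ H := by nlinarith
  -- Taylor bound between points of domh
  have taylor : ∀ a ∈ domh, ∀ b ∈ domh,
      |f b - OmegaTaylor p f a b| ≤ Lp * ‖b - a‖ ^ (p + 1) / (Nat.factorial (p+1) : ℝ) := by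
    intro a ha b hb
    apply omega_taylor_bound p f U hU hf Lp a b
    · intro t ht
      exact hsub (hdomconv.add_smul_sub_mem ha hb ht)
    · intro t ht
      have hmem : a + t • (b - a) ∈ domh := hdomconv.add_smul_sub_mem ha hb ht
      have := hLip _ hmem _ ha
      simpa [add_sub_cancel_left] using this
  -- all iterates are in domh
  have hxk : ∀ k : ℕ, x k ∈ domh := by
    intro k
    cases k with
    | zero => exact hx0
    | succ n => exact (hstep n).1
  -- the decrease inequality
  have ineqC : ∀ k : ℕ, ∀ y ∈ domh, F (x (k+1)) ≤
      F y + Lp / (Nat.factorial p : ℝ) * ‖y - x k‖ ^ (p + 1) := by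
    intro k y hy
    have t1 := taylor _ (hxk k) _ (hxk (k+1))
    have t2 := taylor _ (hxk k) _ hy
    have hpow1 : (0:ℝ) ≤ ‖x (k+1) - x k‖ ^ (p+1) := by positivity
    have hpow2 : (0:ℝ) ≤ ‖y - x k‖ ^ (p+1) := by positivity
    have b1 : f (x (k+1)) ≤ OmegaTaylor p f (x k) (x (k+1))
        + H / (Nat.factorial (p+1) : ℝ) * ‖x (k+1) - x k‖ ^ (p+1) := by
      have h1 := (abs_le.mp t1).2
      have h2 : Lp * ‖x (k+1) - x k‖ ^ (p+1) / (Nat.factorial (p+1) : ℝ)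
          ≤ H * ‖x (k+1) - x k‖ ^ (p+1) / (Nat.factorial (p+1) : ℝ) := by
        gcongr
      have h3 : H * ‖x (k+1) - x k‖ ^ (p+1) / (Nat.factorial (p+1) : ℝ)
          = H / (Nat.factorial (p+1) : ℝ) * ‖x (k+1) - x k‖ ^ (p+1) := by ring
      linarith
    have b2 : OmegaTaylor p f (x k) y ≤ f y
        + Lp * ‖y - x k‖ ^ (p+1) / (Nat.factorial (p+1) : ℝ) := by
      have h1 := (abs_le.mp t2).1
      linarith
    have estep := (hstep k).2 y hy
    have hco : Lp * ‖y - x k‖ ^ (p+1) / (Nat.factorial (p+1) : ℝ)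
        + H / (Nat.factorial (p+1) : ℝ) * ‖y - x k‖ ^ (p+1)
        = Lp / (Nat.factorial p : ℝ) * ‖y - x k‖ ^ (p+1) := by
      have hco2 : Lp / (Nat.factorial (p+1) : ℝ) + H / (Nat.factorial (p+1) : ℝ)
          = Lp / (Nat.factorial p : ℝ) := by
        rw [hH, hfacsucc]
        field_simp
        ring
      calc Lp * ‖y - x k‖ ^ (p+1) / (Nat.factorial (p+1) : ℝ)
          + H / (Nat.factorial (p+1) : ℝ) * ‖y - x k‖ ^ (p+1)
          = (Lp / (Nat.factorial (p+1) : ℝ) + H / (Nat.factorial (p+1) : ℝ))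
            * ‖y - x k‖ ^ (p+1) := by ring
        _ = Lp / (Nat.factorial p : ℝ) * ‖y - x k‖ ^ (p+1) := by rw [hco2]
    calc F (x (k+1)) = f (x (k+1)) + h (x (k+1)) := hF _
      _ ≤ OmegaTaylor p f (x k) (x (k+1))
          + H / (Nat.factorial (p+1) : ℝ) * ‖x (k+1) - x k‖ ^ (p+1) + h (x (k+1)) := by
            linarith
      _ ≤ OmegaTaylor p f (x k) y
          + H / (Nat.factorial (p+1) : ℝ) * ‖y - x k‖ ^ (p+1) + h y := estep
      _ ≤ f y + Lp * ‖y - x k‖ ^ (p+1) / (Nat.factorial (p+1) : ℝ)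
          + H / (Nat.factorial (p+1) : ℝ) * ‖y - x k‖ ^ (p+1) + h y := by linarith
      _ = F y + Lp / (Nat.factorial p : ℝ) * ‖y - x k‖ ^ (p+1) := by
          rw [hF y]; linarith [hco]
  -- monotonicity and level set boundedness
  have hmono : ∀ k : ℕ, F (x (k+1)) ≤ F (x k) := by
    intro k
    have := ineqC k (x k) (hxk k)
    simpa [sub_self, zero_pow (Nat.succ_ne_zero p)] using this
  have hlev : ∀ k : ℕ, F (x k) ≤ F (x 0) := by
    intro k
    induction k with
    | zero => exact le_refl _
    | succ n ih => exact le_trans (hmono n) ih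
  have hdist : ∀ k : ℕ, ‖x k - xstar‖ ≤ D := fun k => hD _ (hxk k) (hlev k)
  have hD0 : (0:ℝ) ≤ D := le_trans (norm_nonneg _) (hdist 0)
  set C : ℝ := Lp * D ^ (p+1) / (Nat.factorial p : ℝ) with hCdef
  have hC0 : (0:ℝ) ≤ C := by positivity
  -- convexity of F on domh
  have hFc : ConvexOn ℝ domh F := by
    have h1 : ConvexOn ℝ domh f := hfconv.subset hsub hdomconv
    have h2 : ConvexOn ℝ domh (fun z => f z + h z) := h1.add hhconv
    have h3 : F = fun z => f z + h z := funext hF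
    rw [h3]; exact h2
  -- the key recursion
  have recur : ∀ k : ℕ, ∀ α : ℝ, 0 ≤ α → α ≤ 1 →
      F (x (k+1)) - Fstar ≤ (1 - α) * (F (x k) - Fstar) + C * α ^ (p+1) := by
    intro k α hα0 hα1
    set y : E := x k + α • (xstar - x k) with hydef
    have hy : y ∈ domh := hdomconv.add_smul_sub_mem (hxk k) hxstar ⟨hα0, hα1⟩
    have hyeq : y = (1 - α) • (x k) + α • xstar := by
      rw [hydef, smul_sub, sub_smul, one_smul]
      abel
    have hconv : F y ≤ (1 - α) * F (x k) + α * F xstar := by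
      rw [hyeq]
      exact hFc.2 (hxk k) hxstar (by linarith) hα0 (by ring)
    have hnorm : ‖y - x k‖ ≤ α * D := by
      rw [hydef, add_sub_cancel_left, norm_smul, Real.norm_eq_abs, abs_of_nonneg hα0]
      have hdist' : ‖xstar - x k‖ ≤ D := by rw [norm_sub_rev]; exact hdist k
      exact mul_le_mul_of_nonneg_left hdist' hα0
    have hnormpow : ‖y - x k‖ ^ (p+1) ≤ α ^ (p+1) * D ^ (p+1) := by
      calc ‖y - x k‖ ^ (p+1) ≤ (α * D) ^ (p+1) :=
          pow_le_pow_left₀ (norm_nonneg _) hnorm (p+1)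
        _ = α ^ (p+1) * D ^ (p+1) := mul_pow _ _ _
    have hmain := ineqC k y hy
    have hcoefpos : (0:ℝ) ≤ Lp / (Nat.factorial p : ℝ) := by positivity
    have h5 : Lp / (Nat.factorial p : ℝ) * ‖y - x k‖ ^ (p+1) ≤ C * α ^ (p+1) := by
      calc Lp / (Nat.factorial p : ℝ) * ‖y - x k‖ ^ (p+1)
          ≤ Lp / (Nat.factorial p : ℝ) * (α ^ (p+1) * D ^ (p+1)) :=
            mul_le_mul_of_nonneg_left hnormpow hcoefpos
        _ = C * α ^ (p+1) := by rw [hCdef]; ring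
    rw [hFstar]
    linarith
  -- δ_1 ≤ C
  have base : F (x 1) - Fstar ≤ C := by
    have := recur 0 1 zero_le_one le_rfl
    simpa using this
  -- main induction
  have main : ∀ k : ℕ, F (x (k+1)) - Fstar ≤
      ((p:ℝ) + 1) * C * (2 * (p:ℝ) / ((k:ℝ) + 2 * (p:ℝ))) ^ p := by
    intro k
    induction k with
    | zero =>
      have h2p : (2:ℝ) * (p:ℝ) ≠ 0 := by positivity
      have : ((2:ℝ) * (p:ℝ) / ((0:ℕ) + 2 * (p:ℝ))) ^ p = 1 := by
        push_cast
        rw [zero_add, div_self h2p, one_pow]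
      rw [this]
      nlinarith [base]
    | succ k ih =>
      set s : ℝ := (k:ℝ) + 2 * (p:ℝ) with hsdef
      have hs : 2 * (p:ℝ) ≤ s := by
        have : (0:ℝ) ≤ (k:ℝ) := Nat.cast_nonneg k
        rw [hsdef]; linarith
      have hs1pos : (0:ℝ) < s + 1 := by linarith
      set α : ℝ := 2 * (p:ℝ) / (s + 1) with hαdef
      have hα0 : 0 ≤ α := by
        apply div_nonneg  <;> linarith
      have hα1 : α ≤ 1 := by
        rw [hαdef, div_le_one hs1pos]; linarith
      have hrec := recur (k+1) α hα0 hα1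
      have h1mα : (0:ℝ) ≤ 1 - α := by linarith
      have hih := mul_le_mul_of_nonneg_left ih h1mα
      have hnum := num_ineq p hp s hs
      have hnumC := mul_le_mul_of_nonneg_left hnum hC0
      have hcast : ((k+1:ℕ):ℝ) + 2 * (p:ℝ) = s + 1 := by
        rw [hsdef]; push_cast; ring
      rw [hcast]
      have e1 : (1 - α) * (((p:ℝ) + 1) * C * (2 * (p:ℝ) / s) ^ p) + C * α ^ (p+1)
          = C * ((1 - α) * (((p:ℝ) + 1) * (2 * (p:ℝ) / s) ^ p) + α ^ (p+1)) := by ring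
      have e2 : C * (((p:ℝ) + 1) * (2 * (p:ℝ) / (s+1)) ^ p)
          = ((p:ℝ) + 1) * C * (2 * (p:ℝ) / (s+1)) ^ p := by ring
      rw [← hαdef] at hnumC
      linarith [hrec, hih, e1, hnumC, e2]
  -- final conversion
  intro k hk2
  obtain ⟨j, rfl⟩ : ∃ j : ℕ, k = (j + 1) + 1 := ⟨k - 2, by omega⟩
  have hmain := main (j + 1)
  have hkm1 : ((j:ℝ) + 1) = ((j + 1 + 1 : ℕ) : ℝ) - 1 := by push_cast; ring
  have hjpos : (0:ℝ) < (j:ℝ) + 1 := by positivity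
  have h2p0 : (0:ℝ) ≤ 2 * (p:ℝ) := by linarith
  have hmono2 : (2 * (p:ℝ) / (((j+1:ℕ):ℝ) + 2 * (p:ℝ))) ^ p ≤ (2 * (p:ℝ) / ((j:ℝ) + 1)) ^ p := by
    apply pow_le_pow_left₀ (by positivity)
    apply div_le_div_of_nonneg_left h2p0 hjpos
    push_cast; linarith
  have hc1 : (0:ℝ) ≤ ((p:ℝ) + 1) * C := by positivity
  have hfin : F (x (j + 1 + 1)) - Fstar
      ≤ ((p:ℝ) + 1) * C * (2 * (p:ℝ) / ((j:ℝ) + 1)) ^ p := by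
    calc F (x (j + 1 + 1)) - Fstar
        ≤ ((p:ℝ) + 1) * C * (2 * (p:ℝ) / (((j+1:ℕ):ℝ) + 2 * (p:ℝ))) ^ p := hmain
      _ ≤ ((p:ℝ) + 1) * C * (2 * (p:ℝ) / ((j:ℝ) + 1)) ^ p := by
          rw [mul_assoc, mul_assoc]
          apply mul_le_mul_of_nonneg_left _ (by linarith : (0:ℝ) ≤ (p:ℝ) + 1)
          exact mul_le_mul_of_nonneg_left hmono2 hC0
  have heq : ((p:ℝ) + 1) * C * (2 * (p:ℝ) / ((j:ℝ) + 1)) ^ p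
      = ((p : ℝ) + 1) * (2 * (p : ℝ)) ^ p / (Nat.factorial p : ℝ)
        * (Lp * D ^ (p + 1) / (((j + 1 + 1 : ℕ) : ℝ) - 1) ^ p) := by
    rw [hCdef, div_pow]
    push_cast
    have : ((j:ℝ) + 1 + 1) - 1 = (j:ℝ) + 1 := by ring
    rw [this]
    field_simp
  rw [← heq]
  exact hfin
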